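/- Let τ be in the upper half plane ℍ and let α, ρ, λ ∈ ℂ. Then: (1) there is a nonzero constant C (independent of z) such that f_λ(z; α, ρ) = C · [ (q^{2+α+ρ+iλ−z}, q^{1+ρ+iλ+z}; q²)_∞ / (q^{α+ρ−iλ+z}, q^{1+ρ−iλ−z}; q²)_∞ ] · q^{−αz/2}; (2) f_λ(·; α, ρ) is τ^{-1}-periodic, i.e. f_λ(z + τ^{-1}; α, ρ) = f_λ(z; α, ρ) for all z, if and only if α ∈ 2ℤ; (3) the poles of f_λ(·; α, ρ) are contained in (iλ − α − ρ + 2ℤ_{≤0} + τ^{-1}ℤ) ∪ (−iλ + ρ + 1 + 2ℤ_{≥0} + τ^{-1}ℤ); in particular, if τ ∈ iℝ_{>0}, α > 0, ρ ≥ 0 and λ ∈ ℝ, then f_λ(·; α, ρ) is analytic on the strip {z ∈ ℂ : |Re(z)| ≤ ρ}. -/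

import Mathlib

noncomputable section

open Complex

/-- `q^u = exp(2πiτu)`. -/
def qpow (τ u : ℂ) : ℂ := Complex.exp (2 * (Real.pi : ℂ) * Complex.I * τ * u)

/-- The q-gamma type function `Γ_τ(x) = q^{−x²/16} / (−q^{(x+1)/2}; q)_∞`. -/
def qGamma (τ x : ℂ) : ℂ :=
  qpow τ (-(x ^ 2) / 16) / ∏' n : ℕ, (1 + qpow τ ((x + 1) / 2 + (n : ℂ)))

/-- `(q^u; q²)_∞ = ∏_{n≥0} (1 − q^{u+2n})`. -/
def pochQ2 (τ u : ℂ) : ℂ := ∏' n : ℕ, (1 - qpow τ (u + 2 * (n : ℂ)))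

/-- The eigenfunction `f_λ(z; α, ρ)` of the twisted primitive element. -/
def fEig (τ lam α ρ z : ℂ) : ℂ :=
  (qGamma (2 * τ) (-1 - (2 * τ)⁻¹ + α + ρ - Complex.I * lam + z) *
      qGamma (2 * τ) (-(2 * τ)⁻¹ + ρ - Complex.I * lam - z)) /
    (qGamma (2 * τ) (1 - (2 * τ)⁻¹ + α + ρ + Complex.I * lam - z) *
      qGamma (2 * τ) (-(2 * τ)⁻¹ + ρ + Complex.I * lam + z))

/-- The set `(iλ − α − ρ + 2ℤ_{≤0} + τ⁻¹ℤ) ∪ (−iλ + ρ + 1 + 2ℤ_{≥0} + τ⁻¹ℤ)`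
containing the poles of `f_λ(·; α, ρ)`. -/
def fEigPoles (τ lam α ρ : ℂ) : Set ℂ :=
  {z : ℂ | ∃ k l : ℤ, k ≤ 0 ∧
      z = Complex.I * lam - α - ρ + 2 * (k : ℂ) + τ⁻¹ * (l : ℂ)} ∪
  {z : ℂ | ∃ k l : ℤ, 0 ≤ k ∧
      z = -(Complex.I * lam) + ρ + 1 + 2 * (k : ℂ) + τ⁻¹ * (l : ℂ)}



namespace FEigAux

lemma qpow_add (τ u v : ℂ) : qpow τ (u + v) = qpow τ u * qpow τ v := by
  rw [qpow, qpow, qpow, ← Complex.exp_add]; congr 1; ring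

lemma qpow_ne_zero (τ u : ℂ) : qpow τ u ≠ 0 := Complex.exp_ne_zero _

lemma qpow_int (τ : ℂ) (hτ : τ ≠ 0) (l : ℤ) : qpow τ (τ⁻¹ * l) = 1 := by
  rw [qpow, show 2 * (Real.pi:ℂ) * I * τ * (τ⁻¹ * l) = l * (2 * Real.pi * I) by
    field_simp]
  exact Complex.exp_int_mul_two_pi_mul_I l

lemma qpow_shift (τ : ℂ) (hτ : τ ≠ 0) (u : ℂ) (l : ℤ) :
    qpow τ (u + τ⁻¹ * l) = qpow τ u := by
  rw [qpow_add, qpow_int τ hτ, mul_one]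

lemma qpow_factor (τ u : ℂ) (n : ℕ) :
    qpow τ (u + 2 * n) = qpow τ u * (qpow τ 2) ^ n := by
  rw [qpow, qpow, qpow, ← Complex.exp_nat_mul, ← Complex.exp_add]; congr 1; ring

lemma pochQ2_shift (τ : ℂ) (hτ : τ ≠ 0) (u : ℂ) (l : ℤ) :
    pochQ2 τ (u + τ⁻¹ * l) = pochQ2 τ u := by
  refine tprod_congr fun n => ?_
  rw [show u + τ⁻¹ * l + 2 * n = (u + 2 * n) + τ⁻¹ * l by ring, qpow_shift τ hτ]

/-- `∏' n, (1 - w * c ^ n)`. -/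
def qprod (c w : ℂ) : ℂ := ∏' n : ℕ, (1 - w * c ^ n)

lemma pochQ2_eq_qprod (τ u : ℂ) : pochQ2 τ u = qprod (qpow τ 2) (qpow τ u) := by
  exact tprod_congr fun n => by rw [qpow_factor]

end FEigAux

namespace FEigAux
open Metric

set_option maxHeartbeats 4000000 in
lemma qprod_core {c : ℂ} (hc : ‖c‖ < 1) (w₀ : ℂ) :
    ∃ N : ℕ,
      (∀ w ∈ ball w₀ 1,
        qprod c w = (∏ n ∈ Finset.range N, (1 - w * c ^ n)) *
          Complex.exp (∑' n : ℕ, Complex.log (1 - w * c ^ (n + N)))) ∧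
      DifferentiableOn ℂ
        (fun w => ∑' n : ℕ, Complex.log (1 - w * c ^ (n + N))) (ball w₀ 1) := by
  obtain ⟨N, hN⟩ := exists_pow_lt_of_lt_one
    (show (0:ℝ) < (1/2)/(‖w₀‖+1) by positivity) hc
  set M : ℝ := ‖w₀‖ + 1 with hM
  have hM0 : (0:ℝ) < M := by positivity
  have hNle : M * ‖c‖ ^ N ≤ 1/2 := by
    rw [lt_div_iff₀ hM0] at hN; nlinarith
  have hw : ∀ w ∈ ball w₀ 1, ‖w‖ ≤ M := by
    intro w hw
    have h1 : ‖w - w₀‖ < 1 := mem_ball_iff_norm.mp hw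
    have h2 : ‖w‖ - ‖w₀‖ ≤ ‖w - w₀‖ := norm_sub_norm_le w w₀
    simp only [hM]; linarith
  have hkey : ∀ w ∈ ball w₀ 1, ∀ n : ℕ, ‖w * c ^ (n + N)‖ ≤ 1/2 * ‖c‖ ^ n := by
    intro w hw' n
    have h1 : ‖w * c ^ (n + N)‖ = ‖w‖ * (‖c‖ ^ N * ‖c‖ ^ n) := by
      rw [norm_mul, norm_pow, pow_add]; ring
    rw [h1]
    have h2 : ‖c‖ ^ n ≤ 1 := pow_le_one₀ (norm_nonneg c) hc.le
    have h3 : (0:ℝ) ≤ ‖c‖ ^ n := by positivity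
    have h4 : (0:ℝ) ≤ ‖c‖ ^ N := by positivity
    calc ‖w‖ * (‖c‖ ^ N * ‖c‖ ^ n) ≤ M * (‖c‖ ^ N * ‖c‖ ^ n) :=
          mul_le_mul_of_nonneg_right (hw w hw') (by positivity)
      _ = (M * ‖c‖ ^ N) * ‖c‖ ^ n := by ring
      _ ≤ 1/2 * ‖c‖ ^ n := mul_le_mul_of_nonneg_right hNle h3
  have hhalf : ∀ w ∈ ball w₀ 1, ∀ n : ℕ, ‖w * c ^ (n + N)‖ ≤ 1/2 := by
    intro w hw' n
    have h2 : ‖c‖ ^ n ≤ 1 := pow_le_one₀ (norm_nonneg c) hc.le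
    have := hkey w hw' n; nlinarith
  have hne : ∀ w ∈ ball w₀ 1, ∀ n : ℕ, 1 - w * c ^ (n + N) ≠ 0 := by
    intro w hw' n h
    rw [sub_eq_zero] at h
    have := hhalf w hw' n
    rw [← h] at this; norm_num at this
  have hslit : ∀ w ∈ ball w₀ 1, ∀ n : ℕ, 1 - w * c ^ (n + N) ∈ slitPlane := by
    intro w hw' n
    left
    have h1 : |(w * c ^ (n + N)).re| ≤ ‖w * c ^ (n + N)‖ := abs_re_le_norm _
    have := hhalf w hw' n
    simp only [sub_re, one_re, mul_re]
    have h2 : (w * c ^ (n + N)).re ≤ 1/2 := by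
      rw [abs_le] at h1; linarith
    simp only [mul_re] at h2; linarith
  have hlogbound : ∀ w ∈ ball w₀ 1, ∀ n : ℕ,
      ‖Complex.log (1 - w * c ^ (n + N))‖ ≤ 3/2 * (1/2 * ‖c‖ ^ n) := by
    intro w hw' n
    have h1 : ‖-(w * c ^ (n + N))‖ ≤ 1/2 := by rw [norm_neg]; exact hhalf w hw' n
    have h2 := Complex.norm_log_one_add_half_le_self h1
    rw [show (1:ℂ) + -(w * c ^ (n + N)) = 1 - w * c ^ (n + N) by ring] at h2
    rw [norm_neg] at h2
    have := hkey w hw' n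
    linarith
  have hsum : Summable (fun n : ℕ => (3:ℝ)/2 * (1/2 * ‖c‖ ^ n)) :=
    ((summable_geometric_of_lt_one (norm_nonneg c) hc).mul_left _).mul_left _
  have hlogsummable : ∀ w ∈ ball w₀ 1,
      Summable (fun n : ℕ => Complex.log (1 - w * c ^ (n + N))) := by
    intro w hw'
    exact Summable.of_norm_bounded hsum (hlogbound w hw')
  have htail : ∀ w ∈ ball w₀ 1,
      (∏' n : ℕ, (1 - w * c ^ (n + N))) =
        Complex.exp (∑' n : ℕ, Complex.log (1 - w * c ^ (n + N))) := by
    intro w hw'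
    have := Complex.cexp_tsum_eq_tprod
      (f := fun n => 1 - w * c ^ (n + N))
      (hne w hw') (hlogsummable w hw')
    exact this.symm
  have hmultail : ∀ w ∈ ball w₀ 1,
      Multipliable (fun n : ℕ => 1 - w * c ^ (n + N)) := by
    intro w hw'
    exact Complex.multipliable_of_summable_log
      (f := fun n => 1 - w * c ^ (n + N)) (hlogsummable w hw')
  refine ⟨N, fun w hw' => ?_, ?_⟩
  · rw [qprod, ← (hmultail w hw').prod_mul_tprod_nat_mul', htail w hw']
  · refine differentiableOn_tsum_of_summable_norm hsum (fun n => ?_) isOpen_ball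
      (fun n w hw' => hlogbound w hw' n)
    exact (((differentiable_id.mul_const _).const_sub 1).differentiableOn).clog
      (fun w hw' => hslit w hw' n)

end FEigAux

namespace FEigAux
open Metric

lemma qprod_ne_zero {c : ℂ} (hc : ‖c‖ < 1) (w : ℂ)
    (h : ∀ n : ℕ, 1 - w * c ^ n ≠ 0) : qprod c w ≠ 0 := by
  obtain ⟨N, heq, -⟩ := qprod_core hc w
  rw [heq w (mem_ball_self one_pos)]
  exact mul_ne_zero (Finset.prod_ne_zero_iff.mpr fun n _ => h n) (Complex.exp_ne_zero _)

lemma qprod_analyticAt {c : ℂ} (hc : ‖c‖ < 1) (w₀ : ℂ) :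
    AnalyticAt ℂ (qprod c) w₀ := by
  obtain ⟨N, heq, hdiff⟩ := qprod_core hc w₀
  have hd : DifferentiableOn ℂ (qprod c) (ball w₀ 1) := by
    refine DifferentiableOn.congr (f := fun w =>
      (∏ n ∈ Finset.range N, (1 - w * c ^ n)) *
        Complex.exp (∑' n : ℕ, Complex.log (1 - w * c ^ (n + N)))) ?_ heq
    refine DifferentiableOn.mul ?_ hdiff.cexp
    exact (Differentiable.differentiableOn (by
      apply Differentiable.fun_finsetProd
      intro i _
      exact (differentiable_id.mul_const _).const_sub 1))
  exact (hd.analyticOnNhd isOpen_ball) w₀ (mem_ball_self one_pos)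

end FEigAux

namespace FEigAux

lemma norm_q2_lt_one {τ : ℂ} (hτ : 0 < τ.im) : ‖qpow τ 2‖ < 1 := by
  rw [qpow, Complex.norm_exp]
  rw [Real.exp_lt_one_iff]
  have h : 2 * (Real.pi : ℂ) * I * τ * 2 = ((4 * Real.pi : ℝ) : ℂ) * (τ * I) := by
    push_cast; ring
  rw [h]
  have h2 : (((4 * Real.pi : ℝ) : ℂ) * (τ * I)).re = 4 * Real.pi * (-τ.im) := by
    simp [Complex.mul_re]
  rw [h2]
  have := Real.pi_pos
  nlinarith

lemma pochQ2_ne_zero {τ : ℂ} (hτ : 0 < τ.im) (u : ℂ)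
    (h : ∀ n : ℕ, qpow τ (u + 2 * n) ≠ 1) : pochQ2 τ u ≠ 0 := by
  rw [pochQ2_eq_qprod]
  refine qprod_ne_zero (norm_q2_lt_one hτ) _ fun n => ?_
  rw [← qpow_factor]
  exact sub_ne_zero.mpr fun hh => h n hh.symm

lemma qpow_affine_analytic (τ b e z₀ : ℂ) :
    AnalyticAt ℂ (fun z => qpow τ (b + e * z)) z₀ := by
  simp only [qpow]
  exact (analyticAt_const.mul (analyticAt_const.add
    (analyticAt_const.mul (analyticAt_id)))).cexp

lemma pochQ2_affine_analytic {τ : ℂ} (hτ : 0 < τ.im) (b e z₀ : ℂ) :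
    AnalyticAt ℂ (fun z => pochQ2 τ (b + e * z)) z₀ := by
  have h : (fun z => pochQ2 τ (b + e * z)) =
      (qprod (qpow τ 2)) ∘ (fun z => qpow τ (b + e * z)) :=
    funext fun z => pochQ2_eq_qprod τ _
  rw [h]
  exact (qprod_analyticAt (norm_q2_lt_one hτ) _).comp (qpow_affine_analytic τ b e z₀)

end FEigAux


namespace FEigAux

/-- The constant in the product formula. -/
def E0 (τ lam α ρ : ℂ) : ℂ :=
  ((1 - (2*τ)⁻¹ + α + ρ + I*lam)^2 + (-(2*τ)⁻¹ + ρ + I*lam)^2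
    - (-1 - (2*τ)⁻¹ + α + ρ - I*lam)^2 - (-(2*τ)⁻¹ + ρ - I*lam)^2) / 16

lemma qGamma_eq {τ : ℂ} (hτ0 : τ ≠ 0) (x : ℂ) :
    qGamma (2 * τ) x = qpow (2 * τ) (-(x ^ 2) / 16) / pochQ2 τ (x + 1 + (2 * τ)⁻¹) := by
  rw [qGamma, pochQ2]
  congr 1
  refine (tprod_congr fun n => ?_).symm
  have h1 : qpow τ ((2 * τ)⁻¹) = -1 := by
    rw [qpow, show 2 * (Real.pi:ℂ) * I * τ * (2*τ)⁻¹ = Real.pi * I by field_simp]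
    exact Complex.exp_pi_mul_I
  have h2 : qpow τ (x + 1 + (2*τ)⁻¹ + 2*(n:ℂ)) =
      qpow τ (x + 1 + 2*(n:ℂ)) * qpow τ ((2*τ)⁻¹) := by
    rw [← qpow_add]; congr 1; ring
  have h3 : qpow τ (x + 1 + 2*(n:ℂ)) = qpow (2*τ) ((x+1)/2 + (n:ℂ)) := by
    rw [qpow, qpow]; congr 1; ring
  rw [h2, h1, h3]; ring

lemma div_helper (a b c d pA pB pC pD Cc w : ℂ) (hc : c ≠ 0) (hd : d ≠ 0)
    (h : a * b = Cc * w * (c * d)) :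
    a / pA * (b / pB) / (c / pC * (d / pD)) = Cc * (pC * pD) / (pA * pB) * w := by
  have hcd : c * d ≠ 0 := mul_ne_zero hc hd
  have h1 : a / pA * (b / pB) / (c / pC * (d / pD))
      = a * b * (c * d)⁻¹ * (pC * pD) * (pA * pB)⁻¹ := by
    simp only [div_eq_mul_inv, mul_inv, inv_inv]; ring
  have h2 : Cc * (pC * pD) / (pA * pB) * w
      = Cc * w * (c * d) * (c * d)⁻¹ * (pC * pD) * (pA * pB)⁻¹ := by
    rw [show Cc * w * (c*d) * (c*d)⁻¹ * (pC * pD) * (pA * pB)⁻¹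
      = (c*d) * (c*d)⁻¹ * (Cc * (pC * pD) * (pA * pB)⁻¹ * w) by ring,
      mul_inv_cancel₀ hcd, one_mul, div_eq_mul_inv]
  rw [h1, h, h2]

lemma formula {τ : ℂ} (hτ0 : τ ≠ 0) (lam α ρ z : ℂ) :
    fEig τ lam α ρ z =
      qpow (2*τ) (E0 τ lam α ρ) *
        (pochQ2 τ (2 + α + ρ + I*lam - z) * pochQ2 τ (1 + ρ + I*lam + z)) /
        (pochQ2 τ (α + ρ - I*lam + z) * pochQ2 τ (1 + ρ - I*lam - z)) *
        qpow τ (-(α*z)/2) := by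
  rw [fEig]
  simp only [qGamma_eq hτ0]
  rw [show -1 - (2*τ)⁻¹ + α + ρ - I*lam + z + 1 + (2*τ)⁻¹ = α + ρ - I*lam + z by ring,
      show -(2*τ)⁻¹ + ρ - I*lam - z + 1 + (2*τ)⁻¹ = 1 + ρ - I*lam - z by ring,
      show 1 - (2*τ)⁻¹ + α + ρ + I*lam - z + 1 + (2*τ)⁻¹ = 2 + α + ρ + I*lam - z by ring,
      show -(2*τ)⁻¹ + ρ + I*lam + z + 1 + (2*τ)⁻¹ = 1 + ρ + I*lam + z by ring]
  refine div_helper _ _ _ _ _ _ _ _ _ _ (qpow_ne_zero _ _) (qpow_ne_zero _ _) ?_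
  rw [E0]
  simp only [qpow, ← Complex.exp_add]
  congr 1
  ring

end FEigAux

namespace FEigAux

lemma qpow_comp_analytic (τ : ℂ) {f : ℂ → ℂ} {z₀ : ℂ} (hf : AnalyticAt ℂ f z₀) :
    AnalyticAt ℂ (fun z => qpow τ (f z)) z₀ := by
  simp only [qpow]
  exact (analyticAt_const.mul hf).cexp

lemma pochQ2_comp_analytic {τ : ℂ} (hτ : 0 < τ.im) {f : ℂ → ℂ} {z₀ : ℂ}
    (hf : AnalyticAt ℂ f z₀) :
    AnalyticAt ℂ (fun z => pochQ2 τ (f z)) z₀ := by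
  have h : (fun z => pochQ2 τ (f z)) = (qprod (qpow τ 2)) ∘ (fun z => qpow τ (f z)) :=
    funext fun z => pochQ2_eq_qprod τ (f z)
  rw [h]
  exact (qprod_analyticAt (norm_q2_lt_one hτ) _).comp (qpow_comp_analytic τ hf)

lemma qpow_eq_one {τ : ℂ} (hτ0 : τ ≠ 0) {v : ℂ} (h : qpow τ v = 1) :
    ∃ m : ℤ, v = τ⁻¹ * m := by
  rw [qpow, Complex.exp_eq_one_iff] at h
  obtain ⟨m, hm⟩ := h
  refine ⟨m, ?_⟩
  have hπ : (2:ℂ) * Real.pi * I ≠ 0 :=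
    mul_ne_zero (mul_ne_zero two_ne_zero (ofReal_ne_zero.mpr Real.pi_ne_zero)) I_ne_zero
  have h2 : (2*(Real.pi:ℂ)*I) * (τ * v) = (2*(Real.pi:ℂ)*I) * m := by linear_combination hm
  have h3 := mul_left_cancel₀ hπ h2
  field_simp
  linear_combination h3

lemma qpow_period_shift {τ : ℂ} (hτ0 : τ ≠ 0) (α z : ℂ) :
    qpow τ (-(α*(z + τ⁻¹))/2) = qpow τ (-(α*z)/2) * Complex.exp (-(Real.pi*I*α)) := by
  rw [qpow, qpow, ← Complex.exp_add]
  congr 1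
  field_simp
  ring

lemma periodic_step {τ : ℂ} (hτ0 : τ ≠ 0) (lam α ρ z : ℂ) :
    fEig τ lam α ρ (z + τ⁻¹) = fEig τ lam α ρ z * Complex.exp (-(Real.pi*I*α)) := by
  rw [formula hτ0 lam α ρ (z + τ⁻¹), formula hτ0 lam α ρ z]
  rw [show 2 + α + ρ + I*lam - (z + τ⁻¹) = (2 + α + ρ + I*lam - z) + τ⁻¹ * ((-1:ℤ):ℂ) by
        push_cast; ring,
      show 1 + ρ + I*lam + (z + τ⁻¹) = (1 + ρ + I*lam + z) + τ⁻¹ * ((1:ℤ):ℂ) by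
        push_cast; ring,
      show α + ρ - I*lam + (z + τ⁻¹) = (α + ρ - I*lam + z) + τ⁻¹ * ((1:ℤ):ℂ) by
        push_cast; ring,
      show 1 + ρ - I*lam - (z + τ⁻¹) = (1 + ρ - I*lam - z) + τ⁻¹ * ((-1:ℤ):ℂ) by
        push_cast; ring]
  simp only [pochQ2_shift τ hτ0]
  rw [qpow_period_shift hτ0]
  ring

end FEigAux



/-- (1) `f_λ(z;α,ρ)` equals, up to a nonzero constant,
`(q^{2+α+ρ+iλ−z}, q^{1+ρ+iλ+z}; q²)_∞ / (q^{α+ρ−iλ+z}, q^{1+ρ−iλ−z}; q²)_∞ · q^{−αz/2}`;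
(2) `f_λ(·;α,ρ)` is `τ⁻¹`-periodic if and only if `α ∈ 2ℤ`;
(3) the poles of `f_λ(·;α,ρ)` are contained in
`(iλ−α−ρ+2ℤ_{≤0}+τ⁻¹ℤ) ∪ (−iλ+ρ+1+2ℤ_{≥0}+τ⁻¹ℤ)`; in particular, for
`τ ∈ iℝ_{>0}`, `α > 0`, `ρ ≥ 0` and `λ ∈ ℝ`, it is analytic on the strip `|Re z| ≤ ρ`. -/
theorem fEig_poch_form_periodicity_poles (τ : ℂ) (hτ : 0 < τ.im) (lam α ρ : ℂ) :
    (∃ C : ℂ, C ≠ 0 ∧ ∀ z : ℂ,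
      fEig τ lam α ρ z =
        C * (pochQ2 τ (2 + α + ρ + Complex.I * lam - z) *
              pochQ2 τ (1 + ρ + Complex.I * lam + z)) /
            (pochQ2 τ (α + ρ - Complex.I * lam + z) *
              pochQ2 τ (1 + ρ - Complex.I * lam - z)) *
          qpow τ (-(α * z) / 2)) ∧
    ((∀ z : ℂ, fEig τ lam α ρ (z + τ⁻¹) = fEig τ lam α ρ z) ↔ ∃ k : ℤ, α = 2 * (k : ℂ)) ∧
    (∀ z : ℂ, z ∉ fEigPoles τ lam α ρ → AnalyticAt ℂ (fEig τ lam α ρ) z) ∧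
    (τ.re = 0 → α.im = 0 → 0 < α.re → ρ.im = 0 → 0 ≤ ρ.re → lam.im = 0 →
      ∀ z : ℂ, |z.re| ≤ ρ.re → AnalyticAt ℂ (fEig τ lam α ρ) z) := by
  have hτ0 : τ ≠ 0 := by intro h; rw [h] at hτ; simp at hτ
  -- Part 3a first
  have hpart3 : ∀ z : ℂ, z ∉ fEigPoles τ lam α ρ → AnalyticAt ℂ (fEig τ lam α ρ) z := by
    intro z hz
    have h3 : pochQ2 τ (α + ρ - I*lam + z) ≠ 0 := by
      refine FEigAux.pochQ2_ne_zero hτ _ fun n h => ?_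
      obtain ⟨m, hm⟩ := FEigAux.qpow_eq_one hτ0 h
      refine hz (Set.mem_union_left _ ⟨-n, m, ?_, ?_⟩)
      · exact neg_nonpos.mpr (Int.natCast_nonneg n)
      · push_cast
        linear_combination hm
    have h4 : pochQ2 τ (1 + ρ - I*lam - z) ≠ 0 := by
      refine FEigAux.pochQ2_ne_zero hτ _ fun n h => ?_
      obtain ⟨m, hm⟩ := FEigAux.qpow_eq_one hτ0 h
      refine hz (Set.mem_union_right _ ⟨n, -m, Int.natCast_nonneg n, ?_⟩)
      push_cast
      linear_combination -hm
    have hfun : fEig τ lam α ρ = fun z =>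
        qpow (2*τ) (FEigAux.E0 τ lam α ρ) *
          (pochQ2 τ (2 + α + ρ + I*lam - z) * pochQ2 τ (1 + ρ + I*lam + z)) /
          (pochQ2 τ (α + ρ - I*lam + z) * pochQ2 τ (1 + ρ - I*lam - z)) *
          qpow τ (-(α*z)/2) :=
      funext (FEigAux.formula hτ0 lam α ρ)
    rw [hfun]
    refine AnalyticAt.mul (AnalyticAt.div ?_ ?_ (mul_ne_zero h3 h4)) ?_
    · exact analyticAt_const.mul
        ((FEigAux.pochQ2_comp_analytic hτ (analyticAt_const.sub analyticAt_id)).mul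
          (FEigAux.pochQ2_comp_analytic hτ (analyticAt_const.add analyticAt_id)))
    · exact (FEigAux.pochQ2_comp_analytic hτ (analyticAt_const.add analyticAt_id)).mul
        (FEigAux.pochQ2_comp_analytic hτ (analyticAt_const.sub analyticAt_id))
    · exact FEigAux.qpow_comp_analytic τ
        (((analyticAt_const.mul analyticAt_id).neg).div analyticAt_const two_ne_zero)
  refine ⟨⟨qpow (2*τ) (FEigAux.E0 τ lam α ρ), FEigAux.qpow_ne_zero _ _,
      fun z => FEigAux.formula hτ0 lam α ρ z⟩, ?_, hpart3, ?_⟩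
  · -- periodicity
    constructor
    · intro hper
      -- choose a point where fEig does not vanish
      classical
      set g1 : ℤ × ℕ → ℂ := fun p => (2 + α + ρ + I*lam) + 2*(p.2:ℂ) - τ⁻¹*(p.1:ℂ) with hg1
      set g2 : ℤ × ℕ → ℂ := fun p => τ⁻¹*(p.1:ℂ) - (1 + ρ + I*lam) - 2*(p.2:ℂ) with hg2
      set g3 : ℤ × ℕ → ℂ := fun p => τ⁻¹*(p.1:ℂ) - (α + ρ - I*lam) - 2*(p.2:ℂ) with hg3
      set g4 : ℤ × ℕ → ℂ := fun p => (1 + ρ - I*lam) + 2*(p.2:ℂ) - τ⁻¹*(p.1:ℂ) with hg4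
      set S : Set ℂ := Set.range g1 ∪ Set.range g2 ∪ Set.range g3 ∪ Set.range g4 with hSdef
      have hS : S.Countable :=
        (((Set.countable_range g1).union (Set.countable_range g2)).union
          (Set.countable_range g3)).union (Set.countable_range g4)
      have hCu : ¬ (Set.univ : Set ℂ).Countable := by
        intro h
        have h2 : ((Complex.ofReal ⁻¹' Set.univ) : Set ℝ).Countable :=
          h.preimage Complex.ofReal_injective
        simp only [Set.preimage_univ] at h2
        exact Cardinal.not_countable_real h2
      have hne : S ≠ Set.univ := fun h => hCu (h ▸ hS)
      obtain ⟨z₀, hz₀⟩ := (Set.ne_univ_iff_exists_notMem S).mp hne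
      have hp1 : pochQ2 τ (2 + α + ρ + I*lam - z₀) ≠ 0 := by
        refine FEigAux.pochQ2_ne_zero hτ _ fun n h => ?_
        obtain ⟨m, hm⟩ := FEigAux.qpow_eq_one hτ0 h
        exact hz₀ (Or.inl (Or.inl (Or.inl ⟨(m, n), by
          simp only [hg1]; linear_combination hm⟩)))
      have hp2 : pochQ2 τ (1 + ρ + I*lam + z₀) ≠ 0 := by
        refine FEigAux.pochQ2_ne_zero hτ _ fun n h => ?_
        obtain ⟨m, hm⟩ := FEigAux.qpow_eq_one hτ0 h
        exact hz₀ (Or.inl (Or.inl (Or.inr ⟨(m, n), by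
          simp only [hg2]; linear_combination -hm⟩)))
      have hp3 : pochQ2 τ (α + ρ - I*lam + z₀) ≠ 0 := by
        refine FEigAux.pochQ2_ne_zero hτ _ fun n h => ?_
        obtain ⟨m, hm⟩ := FEigAux.qpow_eq_one hτ0 h
        exact hz₀ (Or.inl (Or.inr ⟨(m, n), by
          simp only [hg3]; linear_combination -hm⟩))
      have hp4 : pochQ2 τ (1 + ρ - I*lam - z₀) ≠ 0 := by
        refine FEigAux.pochQ2_ne_zero hτ _ fun n h => ?_
        obtain ⟨m, hm⟩ := FEigAux.qpow_eq_one hτ0 h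
        exact hz₀ (Or.inr ⟨(m, n), by
          simp only [hg4]; linear_combination hm⟩)
      have hfne : fEig τ lam α ρ z₀ ≠ 0 := by
        rw [FEigAux.formula hτ0]
        exact mul_ne_zero (div_ne_zero (mul_ne_zero (FEigAux.qpow_ne_zero _ _)
          (mul_ne_zero hp1 hp2)) (mul_ne_zero hp3 hp4)) (FEigAux.qpow_ne_zero _ _)
      have h1 := FEigAux.periodic_step hτ0 lam α ρ z₀
      rw [hper z₀] at h1
      have h2 : fEig τ lam α ρ z₀ * 1 = fEig τ lam α ρ z₀ *
          Complex.exp (-(Real.pi*I*α)) := by rw [mul_one]; exact h1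
      have h3 := (mul_left_cancel₀ hfne h2).symm
      rw [Complex.exp_eq_one_iff] at h3
      obtain ⟨m, hm⟩ := h3
      refine ⟨-m, ?_⟩
      have hπI : (Real.pi : ℂ) * I ≠ 0 :=
        mul_ne_zero (ofReal_ne_zero.mpr Real.pi_ne_zero) I_ne_zero
      have h4 : ((Real.pi:ℂ)*I) * α = ((Real.pi:ℂ)*I) * (2*((-m:ℤ):ℂ)) := by
        push_cast
        linear_combination -hm
      exact mul_left_cancel₀ hπI h4
    · rintro ⟨k, hk⟩ z
      rw [FEigAux.periodic_step hτ0 lam α ρ z, hk,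
        show -((Real.pi:ℂ)*I*(2*(k:ℂ))) = ((-k:ℤ):ℂ)*(2*Real.pi*I) by push_cast; ring,
        Complex.exp_int_mul_two_pi_mul_I, mul_one]
  · -- strip analyticity
    intro hre hαim hα hρim hρ hlim z hz
    refine hpart3 z ?_
    rintro (⟨k, l, hk, he⟩ | ⟨k, l, hk, he⟩) <;>
    · have h := congrArg Complex.re he
      simp only [Complex.add_re, Complex.sub_re, Complex.neg_re, Complex.mul_re,
        Complex.I_re, Complex.I_im, Complex.intCast_re, Complex.intCast_im,
        Complex.inv_re, Complex.inv_im, Complex.one_re, Complex.one_im,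
        Complex.re_ofNat, Complex.im_ofNat, hre, hαim, hρim, hlim,
        zero_div, zero_mul, mul_zero, sub_zero, zero_sub, add_zero, zero_add,
        neg_zero, one_mul, mul_one] at h
      rw [abs_le] at hz
      first
      | (have hkk : (k:ℝ) ≤ 0 := by exact_mod_cast hk
         linarith)
      | (have hkk : (0:ℝ) ≤ (k:ℝ) := by exact_mod_cast hk
         linarith)
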